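/- Let (X,P) be an irreducible Markov chain on a countable state space X, and suppose there exist ε ∈ (0,1) and a finite subset A ⊂ X such that sup_{x∈X} Σ_{y∈X∖A} p(x,y) < ε. Then (X,P) is positive recurrent, i.e., for every x ∈ X the mean return time τ̄_x = Σ_{n≥1} n f^{(n)}(x,x) is finite. -/

import Mathlib

open scoped Classical ENNReal

noncomputable section

/-- The `n`-step transition probabilities: the entries of the `n`-th matrix power of `p`. -/
def matPow {X : Type*} (p : X → X → ℝ) : ℕ → X → X → ℝ
  | 0 => fun x y => if x = y then 1 else 0
  | n + 1 => fun x y => ∑' z, matPow p n x z * p z y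

/-- The first-return probabilities `f⁽ⁿ⁾(x,y)`. -/
def fret {X : Type*} (p : X → X → ℝ) : ℕ → X → X → ℝ
  | 0 => fun _ _ => 0
  | 1 => fun x y => p x y
  | n + 2 => fun x y => ∑' z, if z = y then 0 else p x z * fret p (n + 1) z y

/-- `p` is a stochastic matrix. -/
def IsStochastic {X : Type*} (p : X → X → ℝ) : Prop :=
  (∀ x y, 0 ≤ p x y) ∧ (∀ x, Summable (p x)) ∧ (∀ x, ∑' y, p x y = 1)

namespace PosRecAux

variable {X : Type*}

/-- the kernel in `ℝ≥0∞`. -/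
def eker (p : X → X → ℝ) : X → X → ℝ≥0∞ := fun x y => ENNReal.ofReal (p x y)

/-- powers of the kernel in `ℝ≥0∞`. -/
def epow (p : X → X → ℝ) : ℕ → X → X → ℝ≥0∞
  | 0 => fun x y => if x = y then 1 else 0
  | n + 1 => fun x y => ∑' z, epow p n x z * eker p z y

/-- the taboo kernel (column `x₀` deleted). -/
def etab (p : X → X → ℝ) (x₀ : X) : X → X → ℝ≥0∞ :=
  fun z w => if w = x₀ then 0 else eker p z w

/-- row sums of powers of the taboo kernel: probability of avoiding `x₀`
for `n` steps. -/
def eS (p : X → X → ℝ) (x₀ : X) : ℕ → X → ℝ≥0∞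
  | 0 => fun _ => 1
  | n + 1 => fun z => ∑' w, etab p x₀ z w * eS p x₀ n w

variable {p : X → X → ℝ} {x₀ : X}

lemma eker_rowsum (hp : IsStochastic p) (x : X) : ∑' y, eker p x y = 1 := by
  rw [show (fun y => eker p x y) = fun y => ENNReal.ofReal (p x y) from rfl,
    ← ENNReal.ofReal_tsum_of_nonneg (fun y => hp.1 x y) (hp.2.1 x), hp.2.2 x,
    ENNReal.ofReal_one]

lemma epow_rowsum (hp : IsStochastic p) : ∀ n (x : X), ∑' y, epow p n x y = 1 := by
  intro n
  induction n with
  | zero =>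
    intro x
    rw [epow]
    rw [tsum_eq_single x (by intro y hy; simp [Ne.symm hy])]
    simp
  | succ n ih =>
    intro x
    rw [show ∑' y, epow p (n+1) x y = ∑' y, ∑' z, epow p n x z * eker p z y from rfl,
      ENNReal.tsum_comm]
    calc ∑' z, ∑' y, epow p n x z * eker p z y
        = ∑' z, epow p n x z * ∑' y, eker p z y := by
          congr 1; ext z; rw [ENNReal.tsum_mul_left]
      _ = ∑' z, epow p n x z := by simp [eker_rowsum hp]
      _ = 1 := ih x

lemma epow_le_one (hp : IsStochastic p) (n : ℕ) (x y : X) : epow p n x y ≤ 1 := by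
  rw [← epow_rowsum hp n x]
  exact ENNReal.le_tsum y

lemma epow_ne_top (hp : IsStochastic p) (n : ℕ) (x y : X) : epow p n x y ≠ ∞ :=
  (lt_of_le_of_lt (epow_le_one hp n x y) ENNReal.one_lt_top).ne

lemma epow_succ_left (n : ℕ) (x y : X) :
    epow p (n + 1) x y = ∑' w, eker p x w * epow p n w y := by
  induction n generalizing x y with
  | zero =>
    rw [show epow p 1 x y = ∑' z, epow p 0 x z * eker p z y from rfl]
    rw [tsum_eq_single x (by intro z hz; simp [epow, Ne.symm hz]),
      tsum_eq_single y (by intro w hw; simp [epow, hw])]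
    simp [epow]
  | succ n ih =>
    rw [show epow p (n + 2) x y = ∑' z, epow p (n+1) x z * eker p z y from rfl]
    calc ∑' z, epow p (n+1) x z * eker p z y
        = ∑' z, (∑' w, eker p x w * epow p n w z) * eker p z y := by
          congr 1; ext z; rw [ih]
      _ = ∑' z, ∑' w, eker p x w * epow p n w z * eker p z y := by
          congr 1; ext z; rw [ENNReal.tsum_mul_right]
      _ = ∑' w, ∑' z, eker p x w * (epow p n w z * eker p z y) := by
          rw [ENNReal.tsum_comm]; congr 1; ext z; congr 1; ext w; ring
      _ = ∑' w, eker p x w * ∑' z, epow p n w z * eker p z y := by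
          congr 1; ext w; rw [ENNReal.tsum_mul_left]
      _ = ∑' w, eker p x w * epow p (n+1) w y := rfl

lemma matPow_eq (hp : IsStochastic p) : ∀ n (x y : X),
    matPow p n x y = (epow p n x y).toReal := by
  intro n
  induction n with
  | zero => intro x y; by_cases h : x = y <;> simp [matPow, epow, h]
  | succ n ih =>
    intro x y
    rw [show matPow p (n+1) x y = ∑' z, matPow p n x z * p z y from rfl,
      show epow p (n+1) x y = ∑' z, epow p n x z * eker p z y from rfl,
      ENNReal.tsum_toReal_eq (f := fun z => epow p n x z * eker p z y)
        (fun z => ENNReal.mul_ne_top (epow_ne_top hp n x z) ENNReal.ofReal_ne_top)]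
    congr 1; ext z
    rw [ih, ENNReal.toReal_mul, eker, ENNReal.toReal_ofReal (hp.1 z y)]

lemma etab_le (z w : X) : etab p x₀ z w ≤ eker p z w := by
  rw [etab]; split <;> simp

lemma etab_ne_top (z w : X) : etab p x₀ z w ≠ ∞ := by
  rw [etab]; split
  · simp
  · exact ENNReal.ofReal_ne_top

/-- decomposition of the full row sum: taboo row sum plus the deleted entry. -/
lemma etab_rowsum_add (hp : IsStochastic p) (z : X) :
    (∑' w, etab p x₀ z w) + eker p z x₀ = 1 := by
  have h : ∀ w, eker p z w = etab p x₀ z w + (if w = x₀ then eker p z x₀ else 0) := by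
    intro w
    by_cases h : w = x₀ <;> simp [etab, h]
  calc (∑' w, etab p x₀ z w) + eker p z x₀
      = (∑' w, etab p x₀ z w) + ∑' w, (if w = x₀ then eker p z x₀ else 0) := by
        rw [tsum_ite_eq]
    _ = ∑' w, (etab p x₀ z w + if w = x₀ then eker p z x₀ else 0) := by
        rw [ENNReal.tsum_add]
    _ = ∑' w, eker p z w := by congr 1; ext w; rw [← h]
    _ = 1 := eker_rowsum hp z

lemma etab_rowsum_le_one (hp : IsStochastic p) (z : X) :
    ∑' w, etab p x₀ z w ≤ 1 :=
  le_trans le_self_add (le_of_eq (etab_rowsum_add (x₀ := x₀) hp z))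

lemma eS_le_one (hp : IsStochastic p) : ∀ n (z : X), eS p x₀ n z ≤ 1 := by
  intro n
  induction n with
  | zero => intro z; exact le_refl 1
  | succ n ih =>
    intro z
    calc eS p x₀ (n+1) z = ∑' w, etab p x₀ z w * eS p x₀ n w := rfl
      _ ≤ ∑' w, etab p x₀ z w * 1 := ENNReal.tsum_le_tsum fun w =>
          mul_le_mul_right (ih w) _
      _ = ∑' w, etab p x₀ z w := by simp
      _ ≤ 1 := etab_rowsum_le_one hp z

lemma eS_ne_top (hp : IsStochastic p) (n : ℕ) (z : X) : eS p x₀ n z ≠ ∞ :=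
  (lt_of_le_of_lt (eS_le_one hp n z) ENNReal.one_lt_top).ne

lemma eS_succ_le (hp : IsStochastic p) : ∀ n (z : X), eS p x₀ (n+1) z ≤ eS p x₀ n z := by
  intro n
  induction n with
  | zero => intro z; exact eS_le_one hp 1 z
  | succ n ih =>
    intro z
    exact ENNReal.tsum_le_tsum fun w => mul_le_mul_right (ih w) _

lemma eS_le_of_le (hp : IsStochastic p) {m n : ℕ} (h : m ≤ n) (z : X) :
    eS p x₀ n z ≤ eS p x₀ m z := by
  induction n with
  | zero => simp_all
  | succ n ih =>
    rcases Nat.lt_or_ge m (n+1) with h' | h'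
    · exact le_trans (eS_succ_le hp n z) (ih (Nat.lt_succ_iff.mp h'))
    · have : m = n + 1 := le_antisymm h h'
      simp [this]

/-- probability of avoiding `x₀` for `n ≥ 1` steps plus the `n`-step transition
probability to `x₀` is at most 1. -/
lemma eS_add_epow_le_one (hp : IsStochastic p) :
    ∀ n (z : X), eS p x₀ (n+1) z + epow p (n+1) z x₀ ≤ 1 := by
  intro n
  induction n with
  | zero =>
    intro z
    have h1 : epow p 1 z x₀ = eker p z x₀ := by
      rw [show epow p 1 z x₀ = ∑' w, epow p 0 z w * eker p w x₀ from rfl,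
        tsum_eq_single z (by intro w hw; simp [epow, Ne.symm hw])]
      simp [epow]
    have h2 : eS p x₀ 1 z = ∑' w, etab p x₀ z w := by
      rw [show eS p x₀ 1 z = ∑' w, etab p x₀ z w * eS p x₀ 0 w from rfl]
      simp [eS]
    rw [h1, h2, etab_rowsum_add hp z]
  | succ n ih =>
    intro z
    have hdec : epow p (n+2) z x₀ ≤ (∑' w, etab p x₀ z w * epow p (n+1) w x₀)
        + eker p z x₀ := by
      rw [epow_succ_left]
      have h : ∀ w, eker p z w * epow p (n+1) w x₀ ≤
          etab p x₀ z w * epow p (n+1) w x₀ + (if w = x₀ then eker p z x₀ else 0) := by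
        intro w
        by_cases hw : w = x₀
        · rw [hw]
          simpa [etab] using
            mul_le_of_le_one_right' (a := eker p z x₀) (epow_le_one hp (n+1) x₀ x₀)
        · simp [etab, hw]
      calc ∑' w, eker p z w * epow p (n+1) w x₀
          ≤ ∑' w, (etab p x₀ z w * epow p (n+1) w x₀
            + (if w = x₀ then eker p z x₀ else 0)) := ENNReal.tsum_le_tsum h
        _ = (∑' w, etab p x₀ z w * epow p (n+1) w x₀)
            + ∑' w, (if w = x₀ then eker p z x₀ else 0) := ENNReal.tsum_add
        _ = (∑' w, etab p x₀ z w * epow p (n+1) w x₀) + eker p z x₀ := by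
            rw [tsum_ite_eq]
    calc eS p x₀ (n+2) z + epow p (n+2) z x₀
        ≤ (∑' w, etab p x₀ z w * eS p x₀ (n+1) w)
          + ((∑' w, etab p x₀ z w * epow p (n+1) w x₀) + eker p z x₀) :=
          add_le_add_right hdec _
      _ = (∑' w, (etab p x₀ z w * eS p x₀ (n+1) w
            + etab p x₀ z w * epow p (n+1) w x₀)) + eker p z x₀ := by
          rw [← add_assoc, ← ENNReal.tsum_add]
      _ = (∑' w, etab p x₀ z w * (eS p x₀ (n+1) w + epow p (n+1) w x₀)) + eker p z x₀ := by
          congr 1; congr 1; ext w; rw [mul_add]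
      _ ≤ (∑' w, etab p x₀ z w * 1) + eker p z x₀ :=
          add_le_add (ENNReal.tsum_le_tsum fun w => mul_le_mul_right (ih w) _) le_rfl
      _ = (∑' w, etab p x₀ z w) + eker p z x₀ := by simp
      _ = 1 := etab_rowsum_add hp z

/-- submultiplicativity of the survival probabilities. -/
lemma eS_block {c : ℝ≥0∞} {m : ℕ} (hc : ∀ w, eS p x₀ m w ≤ c) :
    ∀ k (z : X), eS p x₀ (k + m) z ≤ c * eS p x₀ k z := by
  intro k
  induction k with
  | zero => intro z; simpa [eS] using hc z
  | succ k ih =>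
    intro z
    have hkm : k + 1 + m = (k + m) + 1 := by omega
    rw [hkm]
    calc eS p x₀ (k + m + 1) z = ∑' w, etab p x₀ z w * eS p x₀ (k + m) w := rfl
      _ ≤ ∑' w, etab p x₀ z w * (c * eS p x₀ k w) :=
          ENNReal.tsum_le_tsum fun w => mul_le_mul_right (ih w) _
      _ = c * ∑' w, etab p x₀ z w * eS p x₀ k w := by
          rw [← ENNReal.tsum_mul_left]; congr 1; ext w; ring
      _ = c * eS p x₀ (k + 1) z := rfl

lemma eS_pow {c : ℝ≥0∞} {m : ℕ} (hc : ∀ w, eS p x₀ m w ≤ c) :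
    ∀ k (z : X), eS p x₀ (k * m) z ≤ c ^ k := by
  intro k
  induction k with
  | zero => intro z; simp [eS]
  | succ k ih =>
    intro z
    calc eS p x₀ ((k+1) * m) z = eS p x₀ (k * m + m) z := by ring_nf
      _ ≤ c * eS p x₀ (k * m) z := eS_block hc (k * m) z
      _ ≤ c * c ^ k := mul_le_mul_right (ih z) c
      _ = c ^ (k + 1) := by ring

/-- helper: `ofReal` of a real `tsum` of nonnegative terms is at most a
dominating `ℝ≥0∞` tsum. -/
lemma ofReal_tsum_le {g : X → ℝ} {G : X → ℝ≥0∞} (hg : ∀ w, 0 ≤ g w)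
    (h : ∀ w, ENNReal.ofReal (g w) ≤ G w) :
    ENNReal.ofReal (∑' w, g w) ≤ ∑' w, G w := by
  by_cases hs : Summable g
  · rw [ENNReal.ofReal_tsum_of_nonneg hg hs]
    exact ENNReal.tsum_le_tsum h
  · rw [tsum_eq_zero_of_not_summable hs]
    simp

lemma fret_bound (hp : IsStochastic p) :
    ∀ n (z : X), 0 ≤ fret p (n+1) z x₀ ∧
      ENNReal.ofReal (fret p (n+1) z x₀) ≤ eS p x₀ n z := by
  intro n
  induction n with
  | zero =>
    intro z
    refine ⟨hp.1 z x₀, ?_⟩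
    have : p z x₀ ≤ 1 := by
      rw [← hp.2.2 z]
      exact Summable.le_tsum (hp.2.1 z) x₀ fun j _ => hp.1 z j
    calc ENNReal.ofReal (fret p 1 z x₀) = ENNReal.ofReal (p z x₀) := rfl
      _ ≤ ENNReal.ofReal 1 := ENNReal.ofReal_le_ofReal this
      _ = eS p x₀ 0 z := by simp [eS]
  | succ n ih =>
    intro z
    have hg : ∀ w, 0 ≤ (if w = x₀ then 0 else p z w * fret p (n+1) w x₀) := by
      intro w
      split
      · exact le_refl 0
      · exact mul_nonneg (hp.1 z w) (ih w).1
    have hfr : fret p (n+2) z x₀ =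
        ∑' w, (if w = x₀ then 0 else p z w * fret p (n+1) w x₀) := rfl
    constructor
    · rw [hfr]; exact tsum_nonneg hg
    · rw [hfr]
      have hdom : ∀ w, ENNReal.ofReal (if w = x₀ then 0 else p z w * fret p (n+1) w x₀)
          ≤ etab p x₀ z w * eS p x₀ n w := by
        intro w
        by_cases hw : w = x₀
        · simp [hw, etab]
        · rw [if_neg hw, ENNReal.ofReal_mul (hp.1 z w)]
          exact mul_le_mul' (by simp [etab, hw, eker]) (ih w).2
      exact le_trans (ofReal_tsum_le hg hdom) (le_of_eq rfl)

/-- summability of `n * r^((n-1)/M)` for `0 < r < 1`. -/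
lemma summable_aux {r : ℝ} (hr0 : 0 < r) (hr1 : r < 1) {M : ℕ} (hM : 0 < M) :
    Summable (fun n : ℕ => (n : ℝ) * r ^ ((n - 1) / M)) := by
  set ρ : ℝ := r ^ ((1 : ℝ) / M) with hρ
  have hρ0 : 0 < ρ := Real.rpow_pos_of_pos hr0 _
  have hρ1 : ρ < 1 := Real.rpow_lt_one hr0.le hr1 (by positivity)
  have hρM : ρ ^ M = r := by
    rw [hρ, ← Real.rpow_natCast (r ^ ((1:ℝ)/M)) M, ← Real.rpow_mul hr0.le]
    rw [one_div, inv_mul_cancel₀ (by exact_mod_cast hM.ne')]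
    simp
  have key : ∀ n : ℕ, (n : ℝ) * r ^ ((n - 1) / M) ≤ (1 / ρ ^ M) * ((n : ℝ) * ρ ^ n) := by
    intro n
    have h1 : r ^ ((n - 1) / M) = ρ ^ (M * ((n - 1) / M)) := by
      rw [pow_mul, hρM]
    have h2 : M * ((n - 1) / M) ≥ n - M := by
      have := Nat.div_add_mod (n - 1) M
      have := Nat.mod_lt (n - 1) hM
      omega
    have h3 : ρ ^ (M * ((n - 1) / M)) ≤ ρ ^ (n - M) :=
      pow_le_pow_of_le_one hρ0.le hρ1.le h2
    have h4 : ρ ^ (n - M) * ρ ^ M ≤ ρ ^ n := by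
      rw [← pow_add]
      exact pow_le_pow_of_le_one hρ0.le hρ1.le (by omega)
    have h5 : ρ ^ (n - M) ≤ ρ ^ n / ρ ^ M := by
      rw [le_div_iff₀ (by positivity)]
      exact h4
    calc (n : ℝ) * r ^ ((n - 1) / M) ≤ (n : ℝ) * (ρ ^ n / ρ ^ M) := by
          rw [h1]
          exact mul_le_mul_of_nonneg_left (le_trans h3 h5) (Nat.cast_nonneg n)
      _ = (1 / ρ ^ M) * ((n : ℝ) * ρ ^ n) := by ring
  have hsum : Summable (fun n : ℕ => (1 / ρ ^ M) * ((n : ℝ) * ρ ^ n)) := by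
    apply Summable.mul_left
    have := summable_pow_mul_geometric_of_norm_lt_one 1 (r := ρ)
      (by rw [Real.norm_eq_abs, abs_of_pos hρ0]; exact hρ1)
    simpa using this
  refine Summable.of_nonneg_of_le (fun n => ?_) key hsum
  positivity

end PosRecAux

/-- if there are `ε ∈ (0,1)` and a finite `A` with
`sup_x ∑_{y ∉ A} p(x,y) < ε`, the irreducible chain is positive recurrent. -/
theorem condition_implies_positive_recurrent {X : Type*} [Countable X]
    (p : X → X → ℝ) (hp : IsStochastic p)
    (hirr : ∀ x y : X, ∃ n : ℕ, 0 < matPow p n x y)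
    (ε : ℝ) (hε : ε ∈ Set.Ioo (0 : ℝ) 1) (A : Finset X)
    (hA : ∀ x, ∑' y, (if y ∈ A then 0 else p x y) < ε) :
    ∀ x : X, Summable (fun n : ℕ => (n : ℝ) * fret p n x x) := by
  intro x
  open PosRecAux in
  -- from every state there is a genuine (≥ 1 step) path to `x`
  have hreach : ∀ a : X, ∃ n, 1 ≤ n ∧ 0 < epow p n a x := by
    intro a
    have hw : ∃ w, 0 < p a w := by
      by_contra h
      push_neg at h
      have h0 : ∀ w, p a w = 0 := fun w => le_antisymm (h w) (hp.1 a w)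
      have := hp.2.2 a
      simp [h0] at this
    obtain ⟨w, hw⟩ := hw
    obtain ⟨n, hn⟩ := hirr w x
    have hepos : 0 < epow p n w x := by
      rw [matPow_eq hp] at hn
      rw [pos_iff_ne_zero]
      intro h0
      rw [h0] at hn
      simp at hn
    refine ⟨n + 1, by omega, ?_⟩
    rw [epow_succ_left]
    calc (0 : ℝ≥0∞) < eker p a w * epow p n w x :=
        ENNReal.mul_pos (by simp [eker, ENNReal.ofReal_pos.mpr hw, ne_of_gt,
          (ENNReal.ofReal_pos.mpr hw).ne']) hepos.ne'
      _ ≤ ∑' u, eker p a u * epow p n u x := ENNReal.le_tsum w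
  have hAne : A.Nonempty := by
    rcases A.eq_empty_or_nonempty with h | h
    · exfalso
      have h1 := hA x
      rw [h] at h1
      simp only [Finset.notMem_empty, if_false] at h1
      rw [hp.2.2 x] at h1
      linarith [hε.2]
    · exact h
  set nf : X → ℕ := fun a => (hreach a).choose with hnf
  have hnf1 : ∀ a, 1 ≤ nf a := fun a => (hreach a).choose_spec.1
  have hnf2 : ∀ a, 0 < epow p (nf a) a x := fun a => (hreach a).choose_spec.2
  set N : ℕ := A.sup nf with hN
  set M : ℕ := N + 1 with hM
  set δ : ℝ≥0∞ := A.inf' hAne (fun a => epow p (nf a) a x) with hδ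
  have hδpos : 0 < δ := by
    rw [hδ, Finset.lt_inf'_iff]
    exact fun a _ => hnf2 a
  have hδ1 : δ ≤ 1 := by
    obtain ⟨a₀, ha₀⟩ := hAne
    exact le_trans (Finset.inf'_le _ ha₀) (epow_le_one hp _ _ _)
  -- key: uniform escape probability from A
  have K : ∀ a ∈ A, eS p x N a + δ ≤ 1 := by
    intro a ha
    have h1 : eS p x N a ≤ eS p x (nf a) a := eS_le_of_le hp (Finset.le_sup ha) a
    have h2 : δ ≤ epow p (nf a) a x := Finset.inf'_le _ ha
    have h3 : eS p x (nf a) a + epow p (nf a) a x ≤ 1 := by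
      have hh : nf a = (nf a - 1) + 1 := by have := hnf1 a; omega
      rw [hh]
      exact eS_add_epow_le_one hp _ a
    calc eS p x N a + δ ≤ eS p x (nf a) a + epow p (nf a) a x := add_le_add h1 h2
      _ ≤ 1 := h3
  set d : ℝ := δ.toReal with hd
  have hd0 : 0 < d := ENNReal.toReal_pos hδpos.ne' (lt_of_le_of_lt hδ1
    ENNReal.one_lt_top).ne
  have hd1 : d ≤ 1 := by
    calc d ≤ (1 : ℝ≥0∞).toReal := ENNReal.toReal_mono (by simp) hδ1
      _ = 1 := by simp
  set r : ℝ := 1 - d * (1 - ε) / 2 with hr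
  have hε0 := hε.1
  have hε1 := hε.2
  have hr0 : 0 < r := by rw [hr]; nlinarith
  have hr1 : r < 1 := by rw [hr]; nlinarith
  -- the one-block contraction
  have hstep : ∀ z, eS p x M z ≤ ENNReal.ofReal r := by
    intro z
    set T1 : ℝ≥0∞ := ∑' w, (if w ∈ A then etab p x z w * eS p x N w else 0) with hT1
    set T2 : ℝ≥0∞ := ∑' w, (if w ∈ A then 0 else etab p x z w * eS p x N w) with hT2
    set TA : ℝ≥0∞ := ∑' w, (if w ∈ A then etab p x z w else 0) with hTA
    set TB : ℝ≥0∞ := ∑' w, (if w ∈ A then 0 else etab p x z w) with hTB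
    have ha : eS p x M z = T1 + T2 := by
      rw [hT1, hT2, ← ENNReal.tsum_add]
      rw [show eS p x M z = ∑' w, etab p x z w * eS p x N w from rfl]
      congr 1; ext w; by_cases hw : w ∈ A <;> simp [hw]
    have hTAB : TA + TB = ∑' w, etab p x z w := by
      rw [hTA, hTB, ← ENNReal.tsum_add]
      congr 1; ext w; by_cases hw : w ∈ A <;> simp [hw]
    have hE : (TA + TB) + eker p z x = 1 := by rw [hTAB]; exact etab_rowsum_add hp z
    have hb : T1 ≤ (1 - δ) * TA := by
      rw [hT1, ← ENNReal.tsum_mul_left]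
      refine ENNReal.tsum_le_tsum fun w => ?_
      by_cases hw : w ∈ A
      · simp only [if_pos hw, mul_ite, mul_zero]
        rw [mul_comm (1 - δ)]
        exact mul_le_mul_right (ENNReal.le_sub_of_add_le_right (lt_of_le_of_lt hδ1 ENNReal.one_lt_top).ne (K w hw)) _
      · simp [hw]
    have hc : T2 ≤ TB := by
      rw [hT2, hTB]
      refine ENNReal.tsum_le_tsum fun w => ?_
      by_cases hw : w ∈ A
      · simp [hw]
      · simp only [if_neg hw]
        exact mul_le_of_le_one_right' (eS_le_one hp N w)
    have he : TB ≤ ENNReal.ofReal ε := by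
      have h1 : TB ≤ ∑' w, (if w ∈ A then 0 else eker p z w) := by
        refine ENNReal.tsum_le_tsum fun w => ?_
        by_cases hw : w ∈ A
        · simp [hw]
        · simp only [if_neg hw]; exact etab_le z w
      have hsum : Summable (fun w => if w ∈ A then 0 else p z w) :=
        Summable.of_nonneg_of_le (fun w => by split; exacts [le_refl 0, hp.1 z w])
          (fun w => by split; exacts [hp.1 z w, le_refl _]) (hp.2.1 z)
      have h2 : (∑' w, (if w ∈ A then 0 else eker p z w))
          = ENNReal.ofReal (∑' w, (if w ∈ A then 0 else p z w)) := by
        rw [ENNReal.ofReal_tsum_of_nonneg (fun w => by split; exacts [le_refl 0, hp.1 z w])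
          hsum]
        congr 1; ext w; by_cases hw : w ∈ A <;> simp [hw, eker]
      calc TB ≤ ∑' w, (if w ∈ A then 0 else eker p z w) := h1
        _ = ENNReal.ofReal (∑' w, (if w ∈ A then 0 else p z w)) := h2
        _ ≤ ENNReal.ofReal ε := ENNReal.ofReal_le_ofReal (hA z).le
    -- pass to real numbers
    have hTA1 : TA ≤ 1 := by
      calc TA ≤ TA + TB := le_self_add
        _ ≤ TA + TB + eker p z x := le_self_add
        _ = 1 := hE
    have hTB1 : TB ≤ 1 := by
      calc TB ≤ TA + TB := le_add_self
        _ ≤ TA + TB + eker p z x := le_self_add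
        _ = 1 := hE
    have hTAne : TA ≠ ∞ := (lt_of_le_of_lt hTA1 ENNReal.one_lt_top).ne
    have hTBne : TB ≠ ∞ := (lt_of_le_of_lt hTB1 ENNReal.one_lt_top).ne
    set t : ℝ := TA.toReal with ht
    set u : ℝ := TB.toReal with hu
    set β : ℝ := (eker p z x).toReal with hβ
    have f2 : t + u + β = 1 := by
      have := congrArg ENNReal.toReal hE
      rwa [ENNReal.toReal_add (ENNReal.add_ne_top.mpr ⟨hTAne, hTBne⟩)
        (show eker p z x ≠ ∞ from ENNReal.ofReal_ne_top),
        ENNReal.toReal_add hTAne hTBne, ENNReal.toReal_one] at this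
    have f3 : u ≤ ε := by
      calc u ≤ (ENNReal.ofReal ε).toReal := ENNReal.toReal_mono ENNReal.ofReal_ne_top he
        _ = ε := ENNReal.toReal_ofReal hε0.le
    have f1 : (eS p x M z).toReal ≤ (1 - d) * t + u := by
      have hle : eS p x M z ≤ (1 - δ) * TA + TB := by
        rw [ha]; exact add_le_add hb hc
      have hne : (1 - δ) * TA + TB ≠ ∞ := by
        refine ENNReal.add_ne_top.mpr ⟨ENNReal.mul_ne_top ?_ hTAne, hTBne⟩
        exact (lt_of_le_of_lt (tsub_le_self.trans le_rfl) ENNReal.one_lt_top).ne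
      calc (eS p x M z).toReal ≤ ((1 - δ) * TA + TB).toReal := ENNReal.toReal_mono hne hle
        _ = (1 - δ).toReal * t + u := by
            rw [ENNReal.toReal_add (ENNReal.mul_ne_top (lt_of_le_of_lt tsub_le_self
              ENNReal.one_lt_top).ne hTAne) hTBne, ENNReal.toReal_mul]
        _ = (1 - d) * t + u := by
            congr 2
            rw [ENNReal.toReal_sub_of_le hδ1 (by simp), ENNReal.toReal_one]
    have ft : 0 ≤ t := ENNReal.toReal_nonneg
    have fu : 0 ≤ u := ENNReal.toReal_nonneg
    have fβ : 0 ≤ β := ENNReal.toReal_nonneg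
    rw [ENNReal.le_ofReal_iff_toReal_le (eS_ne_top hp M z) hr0.le]
    generalize hs : (eS p x M z).toReal = s at f1
    clear_value t u β d r
    rcases le_or_gt ((1 - ε) / 2) β with hcase | hcase
    · nlinarith [mul_nonneg hd0.le ft, mul_nonneg (sub_nonneg.mpr hd1) (sub_nonneg.mpr hε1.le)]
    · nlinarith [mul_nonneg hd0.le (by linarith : (0:ℝ) ≤ t - (1 - ε) / 2)]
  -- geometric decay along blocks, then for all times
  have hfb : ∀ m : ℕ, fret p (m + 1) x x ≤ r ^ (m / M) := by
    intro m
    have h1 : ENNReal.ofReal (fret p (m + 1) x x) ≤ eS p x m x := (fret_bound hp m x).2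
    have h2 : eS p x m x ≤ eS p x ((m / M) * M) x :=
      eS_le_of_le hp (Nat.div_mul_le_self m M) x
    have h3 : eS p x ((m / M) * M) x ≤ (ENNReal.ofReal r) ^ (m / M) :=
      eS_pow hstep (m / M) x
    have h4 : ENNReal.ofReal (fret p (m + 1) x x) ≤ ENNReal.ofReal (r ^ (m / M)) := by
      calc ENNReal.ofReal (fret p (m + 1) x x) ≤ (ENNReal.ofReal r) ^ (m / M) :=
          le_trans h1 (le_trans h2 h3)
        _ = ENNReal.ofReal (r ^ (m / M)) := (ENNReal.ofReal_pow hr0.le _).symm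
    exact (ENNReal.ofReal_le_ofReal_iff (by positivity)).mp h4
  refine Summable.of_nonneg_of_le (fun n => ?_) (fun n => ?_)
    (PosRecAux.summable_aux hr0 hr1 (M := M) (by omega))
  · match n with
    | 0 => simp [fret]
    | m + 1 => exact mul_nonneg (Nat.cast_nonneg _) (fret_bound hp m x).1
  · match n with
    | 0 => simp [fret]
    | m + 1 =>
      have : (m + 1 - 1) / M = m / M := by simp
      rw [this]
      exact mul_le_mul_of_nonneg_left (hfb m) (Nat.cast_nonneg _)
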